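/- Antisymmetry of the stochastic order: Let X be a metric space with a partial order making it L-ordered, and let p and q be Radon Borel probability measures on X with finite first moment. If there exist both a coupling of p and q supported on {(x,y) : x ≤ y} and a coupling of q and p supported on {(x,y) : x ≤ y}, then p = q. -/

import Mathlib

open MeasureTheory ENNReal

def IsCoupling {Z : Type*} [MeasurableSpace Z] (r : Measure (Z × Z)) (p q : Measure Z) : Prop :=
  r.map Prod.fst = p ∧ r.map Prod.snd = q

section Aux

variable {X : Type*} [MetricSpace X] [PartialOrder X]

/-- Lipschitz bound in subtraction form. -/
lemma lip_sub_le {f : X → ℝ} (hf : LipschitzWith 1 f) (x y : X) : f x - f y ≤ dist x y := by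
  have h := hf.dist_le_mul x y
  rw [Real.dist_eq, NNReal.coe_one, one_mul] at h
  have := abs_sub_le_iff.1 h
  linarith [this.1]

/-- The canonical monotone 1-Lipschitz function attached to a point `a`. -/
noncomputable def fA (a x : X) : ℝ :=
  sSup {t | ∃ f : X → ℝ, Monotone f ∧ LipschitzWith 1 f ∧ f a = 0 ∧ f x = t}

lemma fA_set_nonempty (a x : X) :
    {t | ∃ f : X → ℝ, Monotone f ∧ LipschitzWith 1 f ∧ f a = 0 ∧ f x = t}.Nonempty :=
  ⟨0, (fun _ => (0 : ℝ)), monotone_const, (LipschitzWith.const 0).weaken zero_le_one, rfl, rfl⟩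

lemma fA_set_bdd (a x : X) :
    BddAbove {t | ∃ f : X → ℝ, Monotone f ∧ LipschitzWith 1 f ∧ f a = 0 ∧ f x = t} := by
  refine ⟨dist x a, ?_⟩
  rintro t ⟨f, _, hfl, hfa, rfl⟩
  have := lip_sub_le hfl x a
  linarith

lemma le_fA {a x : X} {f : X → ℝ} (hm : Monotone f) (hl : LipschitzWith 1 f) (ha : f a = 0) :
    f x ≤ fA a x :=
  le_csSup (fA_set_bdd a x) ⟨f, hm, hl, ha, rfl⟩

lemma fA_le_dist (a x : X) : fA a x ≤ dist x a := by
  apply csSup_le (fA_set_nonempty a x)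
  rintro t ⟨f, _, hfl, hfa, rfl⟩
  have := lip_sub_le hfl x a
  linarith

lemma fA_monotone (a : X) : Monotone (fA a) := by
  intro x y hxy
  apply csSup_le (fA_set_nonempty a x)
  rintro t ⟨f, hfm, hfl, hfa, rfl⟩
  exact (hfm hxy).trans (le_fA hfm hfl hfa)

lemma fA_lipschitz (a : X) : LipschitzWith 1 (fA a) := by
  apply LipschitzWith.of_dist_le_mul
  intro x y
  rw [Real.dist_eq, NNReal.coe_one, one_mul, abs_sub_le_iff]
  constructor
  · have : fA a x ≤ fA a y + dist x y := by
      apply csSup_le (fA_set_nonempty a x)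
      rintro t ⟨f, hfm, hfl, hfa, rfl⟩
      have h1 : f x - f y ≤ dist x y := lip_sub_le hfl x y
      have h2 : f y ≤ fA a y := le_fA hfm hfl hfa
      linarith
    linarith
  · have : fA a y ≤ fA a x + dist x y := by
      apply csSup_le (fA_set_nonempty a y)
      rintro t ⟨f, hfm, hfl, hfa, rfl⟩
      have h1 : f y - f x ≤ dist y x := lip_sub_le hfl y x
      have h2 : f x ≤ fA a x := le_fA hfm hfl hfa
      rw [dist_comm] at h1
      linarith
    linarith

variable [MeasurableSpace X] [BorelSpace X]

/-- A Lipschitz function is integrable with respect to a probability measure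
with finite first moments. -/
lemma integrable_of_lip {f : X → ℝ} (hf : LipschitzWith 1 f) (p : Measure X)
    [IsProbabilityMeasure p] (hpM : ∀ x₀ : X, Integrable (fun x => dist x x₀) p)
    (x₀ : X) : Integrable f p := by
  have hg : Integrable (fun x => |f x₀| + dist x x₀) p :=
    (integrable_const (|f x₀|)).add (hpM x₀)
  refine hg.mono' (hf.continuous.measurable.aestronglyMeasurable) ?_
  filter_upwards with x
  have h1 := lip_sub_le hf x x₀
  have h2 := lip_sub_le hf x₀ x
  rw [dist_comm] at h2
  simp only [Real.norm_eq_abs]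
  rw [abs_le]
  constructor <;> [skip; skip] <;>
  · cases' abs_cases (f x₀) with h h <;> linarith

/-- Monotone Lipschitz integrals increase along the stochastic order. -/
lemma integral_mono_of_coupling {f : X → ℝ} (hfm : Monotone f) (hfl : LipschitzWith 1 f)
    (p q : Measure X) [IsProbabilityMeasure p] [IsProbabilityMeasure q]
    (hpM : ∀ x₀ : X, Integrable (fun x => dist x x₀) p)
    (hqM : ∀ x₀ : X, Integrable (fun x => dist x x₀) q)
    (r : Measure (X × X)) (hc : IsCoupling r p q) (hs : r {z : X × X | z.1 ≤ z.2}ᶜ = 0)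
    (x₀ : X) :
    ∫ x, f x ∂p ≤ ∫ x, f x ∂q := by
  obtain ⟨h1, h2⟩ := hc
  have hfae1 : AEStronglyMeasurable f (r.map Prod.fst) :=
    hfl.continuous.measurable.aestronglyMeasurable
  have hfae2 : AEStronglyMeasurable f (r.map Prod.snd) :=
    hfl.continuous.measurable.aestronglyMeasurable
  have hip : Integrable f p := integrable_of_lip hfl p hpM x₀
  have hiq : Integrable f q := integrable_of_lip hfl q hqM x₀
  have hi1 : Integrable (f ∘ Prod.fst) r := by
    rw [← integrable_map_measure hfae1 measurable_fst.aemeasurable, h1]; exact hip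
  have hi2 : Integrable (f ∘ Prod.snd) r := by
    rw [← integrable_map_measure hfae2 measurable_snd.aemeasurable, h2]; exact hiq
  have e1 : ∫ x, f x ∂p = ∫ z, f z.1 ∂r := by
    rw [← h1, integral_map measurable_fst.aemeasurable hfae1]
  have e2 : ∫ x, f x ∂q = ∫ z, f z.2 ∂r := by
    rw [← h2, integral_map measurable_snd.aemeasurable hfae2]
  rw [e1, e2]
  apply integral_mono_ae hi1 hi2
  have hae : ∀ᵐ z ∂r, z.1 ≤ (z : X × X).2 := by
    rw [ae_iff]
    exact measure_mono_null (fun z hz => hz) hs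
  filter_upwards [hae] with z hz
  exact hfm hz

end Aux

theorem stochastic_order_antisymm
    {X : Type*} [MetricSpace X] [PartialOrder X]
    [MeasurableSpace X] [BorelSpace X]
    (hL : ∀ x y : X, x ≤ y ↔ ∀ f : X → ℝ, Monotone f → LipschitzWith 1 f → f x ≤ f y)
    (p q : Measure X) [IsProbabilityMeasure p] [IsProbabilityMeasure q]
    (hpR : p.InnerRegular) (hqR : q.InnerRegular)
    (hpM : ∀ x₀ : X, Integrable (fun x => dist x x₀) p)
    (hqM : ∀ x₀ : X, Integrable (fun x => dist x x₀) q)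
    (hpq : ∃ r : Measure (X × X), IsCoupling r p q ∧ r {z : X × X | z.1 ≤ z.2}ᶜ = 0)
    (hqp : ∃ r : Measure (X × X), IsCoupling r q p ∧ r {z : X × X | z.1 ≤ z.2}ᶜ = 0) :
    p = q := by
  classical
  obtain ⟨r, hrc, hrs⟩ := hpq
  obtain ⟨s, hsc, hss⟩ := hqp
  -- pick a basepoint (X is nonempty since measures are probability... get from support)
  by_cases hne : Nonempty X
  swap
  · -- X empty: contradiction with probability measure
    rw [not_nonempty_iff] at hne
    have h1 : p Set.univ = 1 := measure_univ
    rw [Set.univ_eq_empty_iff.2 hne, measure_empty] at h1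
    exact absurd h1 zero_ne_one
  obtain ⟨x₀⟩ := hne
  -- equality of integrals of monotone Lipschitz functions
  have hint : ∀ f : X → ℝ, Monotone f → LipschitzWith 1 f → ∫ x, f x ∂p = ∫ x, f x ∂q := by
    intro f hfm hfl
    exact le_antisymm
      (integral_mono_of_coupling hfm hfl p q hpM hqM r hrc hrs x₀)
      (integral_mono_of_coupling hfm hfl q p hqM hpM s hsc hss x₀)
  -- for every a, fA a agrees on the two coordinates r-a.e.
  have haeLe : ∀ᵐ z ∂r, z.1 ≤ (z : X × X).2 := by
    rw [ae_iff]; exact measure_mono_null (fun z hz => hz) hrs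
  have haeEq : ∀ a : X, ∀ᵐ z ∂r, fA a z.1 = fA a (z : X × X).2 := by
    intro a
    set g : X × X → ℝ := fun z => fA a z.2 - fA a z.1 with hg
    have hml : Monotone (fA a) := fA_monotone a
    have hll : LipschitzWith 1 (fA a) := fA_lipschitz a
    have hfae1 : AEStronglyMeasurable (fA a) (r.map Prod.fst) :=
      hll.continuous.measurable.aestronglyMeasurable
    have hfae2 : AEStronglyMeasurable (fA a) (r.map Prod.snd) :=
      hll.continuous.measurable.aestronglyMeasurable
    have hi1 : Integrable (fA a ∘ Prod.fst) r := by
      rw [← integrable_map_measure hfae1 measurable_fst.aemeasurable, hrc.1]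
      exact integrable_of_lip hll p hpM x₀
    have hi2 : Integrable (fA a ∘ Prod.snd) r := by
      rw [← integrable_map_measure hfae2 measurable_snd.aemeasurable, hrc.2]
      exact integrable_of_lip hll q hqM x₀
    have hig : Integrable g r := hi2.sub hi1
    have hnn : 0 ≤ᵐ[r] g := by
      filter_upwards [haeLe] with z hz
      simp only [hg, Pi.zero_apply, sub_nonneg]
      exact hml hz
    have hzero : ∫ z, g z ∂r = 0 := by
      have : ∫ z, g z ∂r = ∫ z, (fA a ∘ Prod.snd) z ∂r - ∫ z, (fA a ∘ Prod.fst) z ∂r :=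
        integral_sub hi2 hi1
      rw [this]
      have e1 : ∫ x, fA a x ∂p = ∫ z, fA a z.1 ∂r := by
        rw [← hrc.1, integral_map measurable_fst.aemeasurable hfae1]
      have e2 : ∫ x, fA a x ∂q = ∫ z, fA a z.2 ∂r := by
        rw [← hrc.2, integral_map measurable_snd.aemeasurable hfae2]
      have := hint (fA a) hml hll
      rw [e1, e2] at this
      simp only [Function.comp]
      linarith
    have := (integral_eq_zero_iff_of_nonneg_ae hnn hig).1 hzero
    filter_upwards [this] with z hz
    have : fA a z.2 - fA a z.1 = 0 := hz
    linarith
  -- a separable set of full p-measure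
  have hK : ∀ n : ℕ, ∃ K : Set X, IsCompact K ∧ 1 - ((n : ℝ≥0∞))⁻¹ < p K := by
    intro n
    have hlt : (1 : ℝ≥0∞) - ((n : ℝ≥0∞))⁻¹ < p Set.univ := by
      rw [measure_univ]
      rcases Nat.eq_zero_or_pos n with h | h
      · rw [h]
        simp only [Nat.cast_zero, ENNReal.inv_zero, ENNReal.sub_top]
        exact zero_lt_one
      · exact ENNReal.sub_lt_self one_ne_top one_ne_zero
          (by simp [Nat.pos_iff_ne_zero.1 h])
    obtain ⟨K, _, hKc, hKm⟩ := hpR.innerRegular MeasurableSet.univ _ hlt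
    exact ⟨K, hKc, hKm⟩
  choose K hKc hKm using hK
  set S : Set X := ⋃ n, K n with hS
  have hSm : MeasurableSet S :=
    MeasurableSet.iUnion (fun n => (hKc n).isClosed.measurableSet)
  have hSfull : p Sᶜ = 0 := by
    have hle : ∀ n : ℕ, p Sᶜ ≤ ((n : ℝ≥0∞))⁻¹ := by
      intro n
      have h1 : p Sᶜ ≤ p (K n)ᶜ :=
        measure_mono (Set.compl_subset_compl.2 (Set.subset_iUnion K n))
      have h2 : p (K n)ᶜ = 1 - p (K n) := by
        rw [measure_compl (hKc n).isClosed.measurableSet (measure_ne_top p _), measure_univ]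
      have h3 : 1 - p (K n) ≤ ((n : ℝ≥0∞))⁻¹ := by
        rw [tsub_le_iff_right]
        rcases le_total (((n : ℝ≥0∞))⁻¹) 1 with h | h
        · calc (1 : ℝ≥0∞) = 1 - ((n : ℝ≥0∞))⁻¹ + ((n : ℝ≥0∞))⁻¹ :=
              (tsub_add_cancel_of_le h).symm
            _ ≤ p (K n) + ((n : ℝ≥0∞))⁻¹ := add_le_add (hKm n).le le_rfl
            _ = ((n : ℝ≥0∞))⁻¹ + p (K n) := add_comm _ _
        · exact h.trans le_self_add
      calc p Sᶜ ≤ p (K n)ᶜ := h1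
        _ = 1 - p (K n) := h2
        _ ≤ _ := h3
    have : p Sᶜ ≤ 0 :=
      ge_of_tendsto' ENNReal.tendsto_inv_nat_nhds_zero (fun n => hle n)
    exact le_antisymm this zero_le
  have hSsep : TopologicalSpace.IsSeparable S :=
    TopologicalSpace.IsSeparable.iUnion (fun n => (hKc n).isSeparable)
  obtain ⟨c, hcc, hcsub⟩ := hSsep
  -- a.e. z, z.1 ∈ closure c
  have haeS : ∀ᵐ z ∂r, (z : X × X).1 ∈ closure c := by
    have h0 : r (Prod.fst ⁻¹' Sᶜ) = 0 := by
      rw [← Measure.map_apply measurable_fst hSm.compl, hrc.1]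
      exact hSfull
    rw [ae_iff]
    apply measure_mono_null _ h0
    intro z hz
    simp only [Set.mem_setOf_eq] at hz
    simp only [Set.mem_preimage, Set.mem_compl_iff]
    exact fun hmem => hz (hcsub hmem)
  -- a.e. z, for all a in c, fA a z.1 = fA a z.2
  have haeAll : ∀ᵐ z ∂r, ∀ a : X, a ∈ c → fA a (z : X × X).1 = fA a z.2 :=
    (ae_ball_iff hcc).2 (fun a _ => haeEq a)
  -- conclude fst = snd a.e.
  have hdiag : (Prod.fst : X × X → X) =ᵐ[r] Prod.snd := by
    filter_upwards [haeLe, haeS, haeAll] with z hz1 hz2 hz3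
    refine le_antisymm hz1 ?_
    rw [hL]
    intro f hfm hfl
    apply _root_.le_of_forall_pos_le_add
    intro ε hε
    obtain ⟨a, hac, had⟩ := Metric.mem_closure_iff.1 hz2 (ε / 2) (by linarith)
    -- f - f a is monotone 1-Lipschitz vanishing at a
    set g : X → ℝ := fun x => f x - f a with hg
    have hgm : Monotone g := fun x y h => by simp only [hg]; linarith [hfm h]
    have hgl : LipschitzWith 1 g := by
      apply LipschitzWith.of_dist_le_mul
      intro x y
      simp only [hg, Real.dist_eq, NNReal.coe_one, one_mul]
      have := hfl.dist_le_mul x y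
      rw [Real.dist_eq, NNReal.coe_one, one_mul] at this
      convert this using 2
      ring
    have hga : g a = 0 := by simp [hg]
    have h1 : f z.2 - f a ≤ fA a z.2 := le_fA hgm hgl hga
    have h2 : fA a z.2 = fA a z.1 := (hz3 a hac).symm
    have h3 : fA a z.1 ≤ dist z.1 a := fA_le_dist a z.1
    have h4 : f a - f z.1 ≤ dist z.1 a := by
      have := lip_sub_le hfl a z.1
      rw [dist_comm] at this
      exact this
    linarith
  rw [← hrc.1, ← hrc.2]
  exact Measure.map_congr hdiag
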